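/- arXiv:1501.04680 — 3 statements merged into one kernel-verified Lean document; each statement's English description precedes it below -/
import Mathlib

section
/- For all 1 ≤ i, j ≤ n−1, the linear operators ρ_i on P(n) satisfy the Coxeter relations: ρ_i² = identity; ρ_i ρ_j = ρ_j ρ_i whenever |i − j| > 1; and ρ_i ρ_{i+1} ρ_i = ρ_{i+1} ρ_i ρ_{i+1} for 1 ≤ i ≤ n−2. Consequently the assignment s_i ↦ ρ_i extends to a representation of the symmetric group S_n on P(n). -/
namespace SkeinNC

/-- A set partition of `Fin n` (as an equivalence relation / setoid) is *noncrossing*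
if whenever `a < b < c < d` with `a ~ c` and `b ~ d`, all four lie in one block. -/
def IsNC {n : ℕ} (π : Setoid (Fin n)) : Prop :=
  ∀ a b c d : Fin n, a < b → b < c → c < d → π.r a c → π.r b d → π.r a b

/-- The set partition `w(π)`: `w i` and `w j` are blockmates in `w(π)` iff
`i` and `j` are blockmates in `π`. -/
def permSP {n : ℕ} (w : Equiv.Perm (Fin n)) (π : Setoid (Fin n)) : Setoid (Fin n) :=
  Setoid.comap w.symm π

/-- The block of `π` containing `i`. -/
def block {n : ℕ} (π : Setoid (Fin n)) (i : Fin n) : Set (Fin n) := {j | π.r i j}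

/-- The number of blocks of a set partition. -/
noncomputable def numBlocks {n : ℕ} (π : Setoid (Fin n)) : ℕ := Nat.card (Quotient π)

/-- The number of singleton blocks of a set partition. -/
noncomputable def numSingletons {n : ℕ} (π : Setoid (Fin n)) : ℕ :=
  Nat.card {i : Fin n // block π i = {i}}

/-- Replace the union `S` (a union of blocks of `π`) by the two blocks `S ∩ C` and `S \ C`,
keeping all blocks outside `S` unchanged. -/
def replaceTwo {n : ℕ} (π : Setoid (Fin n)) (S C : Set (Fin n)) : Setoid (Fin n) where
  r x y := (x ∉ S ∧ y ∉ S ∧ π.r x y) ∨ (x ∈ S ∧ y ∈ S ∧ (x ∈ C ↔ y ∈ C))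
  iseqv := by
    constructor
    · intro x
      by_cases hx : x ∈ S
      · exact Or.inr ⟨hx, hx, Iff.rfl⟩
      · exact Or.inl ⟨hx, hx, π.refl x⟩
    · rintro x y (⟨hx, hy, h⟩ | ⟨hx, hy, h⟩)
      · exact Or.inl ⟨hy, hx, π.symm h⟩
      · exact Or.inr ⟨hy, hx, h.symm⟩
    · rintro x y z (⟨hx, hy, h⟩ | ⟨hx, hy, h⟩) (⟨hy', hz, h'⟩ | ⟨hy', hz, h'⟩)
      · exact Or.inl ⟨hx, hz, π.trans h h'⟩
      · exact absurd hy' hy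
      · exact absurd hy hy'
      · exact Or.inr ⟨hx, hz, h.trans h'⟩

/-- The free `ℚ`-vector space on the set of all set partitions of `Fin n`. -/
abbrev PMod (n : ℕ) : Type := Setoid (Fin n) →₀ ℚ

/-- The basis vector of `PMod n` corresponding to a set partition. -/
noncomputable def bp {n : ℕ} (π : Setoid (Fin n)) : PMod n := Finsupp.single π 1

/-- `V(n)`: the span of the noncrossing set partitions inside `PMod n`. -/
noncomputable def Vsub (n : ℕ) : Submodule ℚ (PMod n) :=
  Submodule.span ℚ (bp '' {π : Setoid (Fin n) | IsNC π})

/-- `V(n,k)`: the span of noncrossing set partitions with exactly `k` blocks. -/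
noncomputable def VsubK (n k : ℕ) : Submodule ℚ (PMod n) :=
  Submodule.span ℚ (bp '' {π : Setoid (Fin n) | IsNC π ∧ numBlocks π = k})

/-- `V(n,k,s)`: the span of noncrossing set partitions with exactly `k` blocks
and exactly `s` singleton blocks. -/
noncomputable def VsubKS (n k s : ℕ) : Submodule ℚ (PMod n) :=
  Submodule.span ℚ
    (bp '' {π : Setoid (Fin n) | IsNC π ∧ numBlocks π = k ∧ numSingletons π = s})

/-- The skein resolution of an (almost noncrossing) set partition `π` computed at the
crossing given by the adjacent pair `i`, `i'` (where `i'` is the successor of `i`):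
`σ(π) = π₁ + π₂ - π₃ - π₄`, where `π₁ = s_i(π)`; `π₂` replaces the blocks of `i` and `i'`
by `{i,i'}` and the union of the remainders; `π₃` keeps `B_{i'}(π) ∖ {i'}` as a block and
adjoins `i'` to the block of `i` (included only when `|B_{i'}(π)| ≥ 3`, i.e. `ℓ ≥ 2`);
`π₄` keeps `B_i(π) ∖ {i}` as a block and adjoins `i` to the block of `i'` (included only
when `|B_i(π)| ≥ 3`, i.e. `k ≥ 2`). -/
noncomputable def skeinAt {n : ℕ} (π : Setoid (Fin n)) (i i' : Fin n) : PMod n :=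
  bp (permSP (Equiv.swap i i') π)
  + bp (replaceTwo π (block π i ∪ block π i') {i, i'})
  - (if 3 ≤ Nat.card (block π i') then
      bp (replaceTwo π (block π i ∪ block π i') (block π i' \ {i'})) else 0)
  - (if 3 ≤ Nat.card (block π i) then
      bp (replaceTwo π (block π i ∪ block π i') (block π i \ {i})) else 0)

open Classical in
/-- The value of the skein operator `τ_i` on a (noncrossing) basis element. -/
noncomputable def tauFun {n : ℕ} (i i' : Fin n) (π : Setoid (Fin n)) : PMod n :=
  if block π i = block π i' then - bp π
  else if IsNC (permSP (Equiv.swap i i') π) then bp (permSP (Equiv.swap i i') π)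
  else skeinAt (permSP (Equiv.swap i i') π) i i'

/-- The skein operator `τ_i` (for the adjacent pair `i`, `i'`), extended linearly. -/
noncomputable def tau {n : ℕ} (i i' : Fin n) : PMod n →ₗ[ℚ] PMod n :=
  Finsupp.lift (PMod n) ℚ (Setoid (Fin n)) (tauFun i i')

open Classical in
/-- The value of the sign-twisted operator `ρ_i` on a basis element of `P(n)`:
`ρ_i(π) = s_i(π)` if `{i}` or `{i+1}` is a singleton block of `π`, and `-s_i(π)` otherwise. -/
noncomputable def rhoFun {n : ℕ} (i i' : Fin n) (π : Setoid (Fin n)) : PMod n :=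
  if block π i = {i} ∨ block π i' = {i'} then bp (permSP (Equiv.swap i i') π)
  else - bp (permSP (Equiv.swap i i') π)

/-- The operator `ρ_i` (for the adjacent pair `i`, `i'`), extended linearly to `P(n)`. -/
noncomputable def rho {n : ℕ} (i i' : Fin n) : PMod n →ₗ[ℚ] PMod n :=
  Finsupp.lift (PMod n) ℚ (Setoid (Fin n)) (rhoFun i i')

/-- Rotation of set partitions: `r(π) = c(π)` where `c = (1,2,…,n)` is the long cycle. -/
def rotate (n : ℕ) : Setoid (Fin n) → Setoid (Fin n) := fun π => permSP (finRotate n) π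

/-- `[r]_q = 1 + q + ⋯ + q^{r-1}` as a polynomial with rational coefficients. -/
noncomputable def qnat (m : ℕ) : Polynomial ℚ := ∑ j ∈ Finset.range m, Polynomial.X ^ j

/-- The `q`-factorial `[m]!_q`. -/
noncomputable def qfact : ℕ → Polynomial ℚ
  | 0 => 1
  | m + 1 => qnat (m + 1) * qfact m


set_option linter.unnecessarySimpa false

lemma singleton_block_permSP {n : ℕ} (w : Equiv.Perm (Fin n)) (π : Setoid (Fin n)) (j : Fin n) :
    block (permSP w π) j = {j} ↔ block π (w.symm j) = {w.symm j} := by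
  have h : ({j} : Set (Fin n)) = w.symm ⁻¹' {w.symm j} := by
    ext x; simp [Equiv.symm_apply_eq]
  rw [show block (permSP w π) j = w.symm ⁻¹' block π (w.symm j) from rfl, h]
  exact (Set.preimage_injective.mpr w.symm.surjective).eq_iff

open Classical in
/-- number of inversions of `w` among non-singleton points of `π` -/
noncomputable def Ninv {n : ℕ} (w : Equiv.Perm (Fin n)) (π : Setoid (Fin n)) : ℕ :=
  (Finset.univ.filter (fun p : Fin n × Fin n =>
     p.1 < p.2 ∧ w p.2 < w p.1 ∧ block π p.1 ≠ {p.1} ∧ block π p.2 ≠ {p.2})).card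

noncomputable def chi {n : ℕ} (w : Equiv.Perm (Fin n)) (π : Setoid (Fin n)) : ℚ :=
  (-1) ^ Ninv w π

lemma Ninv_one {n : ℕ} (π : Setoid (Fin n)) : Ninv 1 π = 0 := by
  classical
  simp only [Ninv, Finset.card_eq_zero]
  apply Finset.filter_false_of_mem
  rintro p - ⟨h1, h2, -⟩
  exact absurd (h2.trans h1) (lt_irrefl _)

lemma chi_one {n : ℕ} (π : Setoid (Fin n)) : chi 1 π = 1 := by
  simp [chi, Ninv_one]

open Classical in
lemma Ninv_mul_parity {n : ℕ} (w₁ w₂ : Equiv.Perm (Fin n)) (π : Setoid (Fin n)) :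
    ((Ninv (w₁ * w₂) π : ZMod 2)) = (Ninv w₂ π : ZMod 2) + (Ninv w₁ (permSP w₂ π) : ZMod 2) := by
  classical
  have hcard : ∀ (u : Equiv.Perm (Fin n)) (σ : Setoid (Fin n)),
      ((Ninv u σ : ZMod 2)) = ∑ p : Fin n × Fin n,
        (if p.1 < p.2 ∧ u p.2 < u p.1 ∧ block σ p.1 ≠ {p.1} ∧ block σ p.2 ≠ {p.2}
         then (1 : ZMod 2) else 0) := by
    intro u σ
    rw [Ninv, Finset.card_filter]
    push_cast
    simp
  rw [hcard, hcard, hcard]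
  -- the "sorted image" map on pairs
  set g : Fin n × Fin n → Fin n × Fin n := fun p =>
    if w₂ p.1 < w₂ p.2 then (w₂ p.1, w₂ p.2) else (w₂ p.2, w₂ p.1) with hg
  have key : ∀ p : Fin n × Fin n,
      (if p.1 < p.2 ∧ (w₁ * w₂) p.2 < (w₁ * w₂) p.1 ∧ block π p.1 ≠ {p.1} ∧ block π p.2 ≠ {p.2}
       then (1 : ZMod 2) else 0)
      = (if p.1 < p.2 ∧ w₂ p.2 < w₂ p.1 ∧ block π p.1 ≠ {p.1} ∧ block π p.2 ≠ {p.2}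
         then (1 : ZMod 2) else 0)
      + (if p.1 < p.2 ∧ w₁ (g p).2 < w₁ (g p).1 ∧ block π p.1 ≠ {p.1} ∧ block π p.2 ≠ {p.2}
         then (1 : ZMod 2) else 0) := by
    intro p
    by_cases hlt : p.1 < p.2
    · by_cases hns : block π p.1 ≠ {p.1} ∧ block π p.2 ≠ {p.2}
      · have hne : w₂ p.1 ≠ w₂ p.2 := fun h => absurd (w₂.injective h) (ne_of_lt hlt)
        rcases lt_or_gt_of_ne hne with h2 | h2
        · simp only [hg, if_pos h2]
          simp only [Equiv.Perm.mul_apply]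
          have : ¬ (w₂ p.2 < w₂ p.1) := not_lt.mpr (le_of_lt h2)
          simp [hlt, hns.1, hns.2, this]
        · simp only [hg, if_neg (not_lt.mpr (le_of_lt h2))]
          simp only [Equiv.Perm.mul_apply]
          have hne' : w₁ (w₂ p.1) ≠ w₁ (w₂ p.2) := fun h => hne (w₁.injective h)
          rcases lt_or_gt_of_ne hne' with h3 | h3
          · have e1 : ¬ (w₁ (w₂ p.2) < w₁ (w₂ p.1)) := not_lt.mpr (le_of_lt h3)
            simp [hlt, hns.1, hns.2, h2, e1, h3]
            decide
          · simp [hlt, hns.1, hns.2, h2, not_lt.mpr (le_of_lt h3), h3]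
      · push_neg at hns
        by_cases h1 : block π p.1 = {p.1}
        · simp [h1]
        · simp [h1, hns h1]
    · simp [hlt]
  rw [Finset.sum_congr rfl (fun p _ => key p), Finset.sum_add_distrib]
  congr 1
  -- reindex the second sum by the sorted-image bijection on the "p.1 < p.2" region
  have hsing : ∀ x : Fin n, block (permSP w₂ π) (w₂ x) = {w₂ x} ↔ block π x = {x} := by
    intro x; rw [singleton_block_permSP]; simp
  simp only [ite_and]
  conv_lhs => rw [← Finset.sum_filter]
  conv_rhs => rw [← Finset.sum_filter]
  set g' : Fin n × Fin n → Fin n × Fin n := fun q =>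
    if w₂.symm q.1 < w₂.symm q.2 then (w₂.symm q.1, w₂.symm q.2)
    else (w₂.symm q.2, w₂.symm q.1) with hg'
  have gmem : ∀ p : Fin n × Fin n, p.1 < p.2 → (g p).1 < (g p).2 := by
    intro p hp
    by_cases h : w₂ p.1 < w₂ p.2
    · simpa [hg, h] using h
    · have : w₂ p.2 < w₂ p.1 := by
        rcases lt_or_gt_of_ne (fun hh => absurd (w₂.injective hh) (ne_of_lt hp)) with h' | h'
        · exact absurd h' h
        · exact h'
      simpa [hg, h] using this
  have g'mem : ∀ q : Fin n × Fin n, q.1 < q.2 → (g' q).1 < (g' q).2 := by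
    intro q hq
    by_cases h : w₂.symm q.1 < w₂.symm q.2
    · simpa [hg', h] using h
    · have : w₂.symm q.2 < w₂.symm q.1 := by
        rcases lt_or_gt_of_ne (fun hh => absurd (w₂.symm.injective hh) (ne_of_lt hq)) with h' | h'
        · exact absurd h' h
        · exact h'
      simpa [hg', h] using this
  apply Finset.sum_bij' (fun p _ => g p) (fun q _ => g' q)
  · intro p hp
    simp only [Finset.mem_filter, Finset.mem_univ, true_and] at hp ⊢
    exact gmem p hp
  · intro q hq
    simp only [Finset.mem_filter, Finset.mem_univ, true_and] at hq ⊢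
    exact g'mem q hq
  · intro p hp
    simp only [Finset.mem_filter, Finset.mem_univ, true_and] at hp
    by_cases h : w₂ p.1 < w₂ p.2
    · simp [hg, hg', h, hp]
    · have h2 : w₂ p.2 < w₂ p.1 := by
        rcases lt_or_gt_of_ne (fun hh => absurd (w₂.injective hh) (ne_of_lt hp)) with h' | h'
        · exact absurd h' h
        · exact h'
      simp [hg, hg', h, not_lt.mpr (le_of_lt h2), hp]
      intro h'
      exact absurd h' (not_lt.mpr hp.le)
  · intro q hq
    simp only [Finset.mem_filter, Finset.mem_univ, true_and] at hq
    by_cases h : w₂.symm q.1 < w₂.symm q.2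
    · simp [hg, hg', h, hq]
    · have h2 : w₂.symm q.2 < w₂.symm q.1 := by
        rcases lt_or_gt_of_ne (fun hh => absurd (w₂.symm.injective hh) (ne_of_lt hq)) with h' | h'
        · exact absurd h' h
        · exact h'
      simp [hg, hg', h, not_lt.mpr (le_of_lt h2), hq]
      intro h'
      exact absurd h' (not_lt.mpr hq.le)
  · intro p hp
    simp only [Finset.mem_filter, Finset.mem_univ, true_and] at hp
    have hns1 := hsing p.1
    have hns2 := hsing p.2
    by_cases h : w₂ p.1 < w₂ p.2
    · simp only [hg, if_pos h]
      by_cases b1 : w₁ (w₂ p.2) < w₁ (w₂ p.1) <;>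
        by_cases a1 : block π p.1 = {p.1} <;> by_cases a2 : block π p.2 = {p.2} <;>
          simp [a1, a2, b1, hns1, hns2]
    · simp only [hg, if_neg h]
      by_cases b1 : w₁ (w₂ p.1) < w₁ (w₂ p.2) <;>
        by_cases a1 : block π p.1 = {p.1} <;> by_cases a2 : block π p.2 = {p.2} <;>
          simp [a1, a2, b1, hns1, hns2]

lemma chi_mul {n : ℕ} (w₁ w₂ : Equiv.Perm (Fin n)) (π : Setoid (Fin n)) :
    chi (w₁ * w₂) π = chi w₂ π * chi w₁ (permSP w₂ π) := by
  have h := Ninv_mul_parity w₁ w₂ π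
  set a := Ninv (w₁ * w₂) π
  set b := Ninv w₂ π
  set c := Ninv w₁ (permSP w₂ π)
  have h2 : a % 2 = (b + c) % 2 := by
    have hh : (a : ZMod 2) = ((b + c : ℕ) : ZMod 2) := by push_cast; rw [h]
    exact (ZMod.natCast_eq_natCast_iff _ _ _).mp hh
  show (-1 : ℚ) ^ a = (-1) ^ b * (-1) ^ c
  rw [← pow_add]
  conv_lhs => rw [← Nat.div_add_mod a 2]
  conv_rhs => rw [← Nat.div_add_mod (b + c) 2]
  rw [pow_add, pow_add, pow_mul, pow_mul, h2]
  norm_num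

open Classical in
lemma Ninv_swap_adj {n : ℕ} (i i' : Fin n) (h : (i : ℕ) + 1 = (i' : ℕ)) (π : Setoid (Fin n)) :
    Ninv (Equiv.swap i i') π =
      if block π i ≠ {i} ∧ block π i' ≠ {i'} then 1 else 0 := by
  classical
  have hii : i < i' := by rw [Fin.lt_def]; omega
  have hswap : ∀ x y : Fin n, x < y →
      (Equiv.swap i i' y < Equiv.swap i i' x ↔ (x = i ∧ y = i')) := by
    intro x y hxy
    simp only [Equiv.swap_apply_def]
    split_ifs <;>
      (try subst_vars) <;>
      simp only [Fin.lt_def, Fin.ext_iff, and_self, and_true, true_and, iff_true] at * <;> omega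
  rw [Ninv]
  have hset : Finset.univ.filter (fun p : Fin n × Fin n =>
      p.1 < p.2 ∧ Equiv.swap i i' p.2 < Equiv.swap i i' p.1 ∧
        block π p.1 ≠ {p.1} ∧ block π p.2 ≠ {p.2})
      = if block π i ≠ {i} ∧ block π i' ≠ {i'} then {(i, i')} else ∅ := by
    ext p
    simp only [Finset.mem_filter, Finset.mem_univ, true_and]
    by_cases hc : block π i ≠ {i} ∧ block π i' ≠ {i'}
    · simp only [if_pos hc, Finset.mem_singleton]
      constructor
      · rintro ⟨h1, h2, h3, h4⟩
        obtain ⟨hx, hy⟩ := (hswap _ _ h1).mp h2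
        exact Prod.ext hx hy
      · rintro rfl
        exact ⟨hii, (hswap i i' hii).mpr ⟨rfl, rfl⟩, hc.1, hc.2⟩
    · simp only [if_neg hc, Finset.notMem_empty, iff_false]
      rintro ⟨h1, h2, h3, h4⟩
      obtain ⟨hx, hy⟩ := (hswap _ _ h1).mp h2
      exact hc ⟨hx ▸ h3, hy ▸ h4⟩
  rw [hset]
  split_ifs <;> simp

open Classical in
lemma chi_swap_adj {n : ℕ} (i i' : Fin n) (h : (i : ℕ) + 1 = (i' : ℕ)) (π : Setoid (Fin n)) :
    chi (Equiv.swap i i') π =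
      if block π i = {i} ∨ block π i' = {i'} then 1 else -1 := by
  rw [chi, Ninv_swap_adj i i' h]
  by_cases h1 : block π i = {i} <;> by_cases h2 : block π i' = {i'} <;> simp [h1, h2]

lemma permSP_mul {n : ℕ} (w v : Equiv.Perm (Fin n)) (π : Setoid (Fin n)) :
    permSP (w * v) π = permSP w (permSP v π) := rfl

lemma permSP_one {n : ℕ} (π : Setoid (Fin n)) : permSP 1 π = π := by
  apply Setoid.ext; intro x y; exact Iff.rfl


lemma lift_single {n : ℕ} {M : Type*} [AddCommMonoid M] [Module ℚ M]
    (f : Setoid (Fin n) → M) (π : Setoid (Fin n)) (b : ℚ) :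
    Finsupp.lift M ℚ (Setoid (Fin n)) f (Finsupp.single π b) = b • f π := by
  simp [Finsupp.lift_apply, Finsupp.sum_single_index]

noncomputable def phiFun {n : ℕ} (w : Equiv.Perm (Fin n)) : PMod n →ₗ[ℚ] PMod n :=
  Finsupp.lift (PMod n) ℚ (Setoid (Fin n)) (fun π => chi w π • bp (permSP w π))

lemma phiFun_single {n : ℕ} (w : Equiv.Perm (Fin n)) (π : Setoid (Fin n)) (b : ℚ) :
    phiFun w (Finsupp.single π b) = b • chi w π • bp (permSP w π) :=
  lift_single _ _ _

noncomputable def phi (n : ℕ) : Equiv.Perm (Fin n) →* Module.End ℚ (PMod n) where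
  toFun w := phiFun w
  map_one' := by
    apply Finsupp.lhom_ext
    intro π b
    rw [phiFun_single, chi_one, permSP_one]
    simp [bp, Finsupp.smul_single]
  map_mul' := by
    intro w₁ w₂
    apply Finsupp.lhom_ext
    intro π b
    rw [Module.End.mul_apply, phiFun_single, phiFun_single, map_smul, map_smul]
    have hb : phiFun w₁ (bp (permSP w₂ π))
        = chi w₁ (permSP w₂ π) • bp (permSP w₁ (permSP w₂ π)) := by
      rw [bp, phiFun_single, one_smul]
    rw [hb, chi_mul, permSP_mul]
    rw [smul_smul, smul_smul, smul_smul, mul_assoc]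

lemma phi_swap_adj {n : ℕ} (i i' : Fin n) (h : (i : ℕ) + 1 = (i' : ℕ)) :
    phi n (Equiv.swap i i') = rho i i' := by
  apply Finsupp.lhom_ext
  intro π b
  show phiFun (Equiv.swap i i') (Finsupp.single π b) = rho i i' (Finsupp.single π b)
  rw [phiFun_single, rho, lift_single]
  congr 1
  rw [chi_swap_adj i i' h, rhoFun]
  split_ifs with hc
  · rw [one_smul]
  · rw [neg_one_smul]

lemma swap_comm_of_ne {α : Type*} [DecidableEq α] {a b c d : α}
    (h1 : a ≠ c) (h2 : a ≠ d) (h3 : b ≠ c) (h4 : b ≠ d) :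
    Equiv.swap a b * Equiv.swap c d = Equiv.swap c d * Equiv.swap a b := by
  rw [Equiv.mul_swap_eq_swap_mul, Equiv.swap_apply_of_ne_of_ne h1.symm h3.symm,
    Equiv.swap_apply_of_ne_of_ne h2.symm h4.symm]

lemma swap_braid {α : Type*} [DecidableEq α] {a b c : α}
    (hab : a ≠ b) (hbc : b ≠ c) (hac : a ≠ c) :
    Equiv.swap a b * (Equiv.swap b c * Equiv.swap a b)
      = Equiv.swap b c * (Equiv.swap a b * Equiv.swap b c) := by
  have l1 : Equiv.swap a b * Equiv.swap b c = Equiv.swap a c * Equiv.swap a b := by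
    rw [Equiv.mul_swap_eq_swap_mul, Equiv.swap_apply_right,
      Equiv.swap_apply_of_ne_of_ne hac.symm hbc.symm]
  have l2 : Equiv.swap b c * Equiv.swap a b = Equiv.swap a c * Equiv.swap b c := by
    rw [Equiv.mul_swap_eq_swap_mul, Equiv.swap_apply_of_ne_of_ne hab hac,
      Equiv.swap_apply_left]
  conv_lhs => rw [← mul_assoc, l1, mul_assoc, Equiv.swap_mul_self, mul_one]
  conv_rhs => rw [← mul_assoc, l2, mul_assoc, Equiv.swap_mul_self, mul_one]


end SkeinNC

open SkeinNC in
/-- **Lemma (ρ's satisfy the Coxeter relations).** The operators `ρ_i` on `P(n)` satisfy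
`ρ_i² = 1`, `ρ_i ρ_j = ρ_j ρ_i` for `|i-j| > 1`, and the braid relation
`ρ_i ρ_{i+1} ρ_i = ρ_{i+1} ρ_i ρ_{i+1}`; consequently `s_i ↦ ρ_i` extends to a
representation of the symmetric group on `P(n)`. -/
theorem rho_coxeter (n : ℕ) :
    (∀ (i : Fin n) (hi : (i : ℕ) + 1 < n),
      (rho i ⟨(i : ℕ) + 1, hi⟩).comp (rho i ⟨(i : ℕ) + 1, hi⟩) = LinearMap.id) ∧
    (∀ (i j : Fin n) (hi : (i : ℕ) + 1 < n) (hj : (j : ℕ) + 1 < n),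
      (i : ℕ) + 1 < (j : ℕ) →
      (rho i ⟨(i : ℕ) + 1, hi⟩).comp (rho j ⟨(j : ℕ) + 1, hj⟩)
        = (rho j ⟨(j : ℕ) + 1, hj⟩).comp (rho i ⟨(i : ℕ) + 1, hi⟩)) ∧
    (∀ (i : Fin n) (h2 : (i : ℕ) + 2 < n),
      (rho i ⟨(i : ℕ) + 1, by omega⟩).comp
        ((rho (⟨(i : ℕ) + 1, by omega⟩ : Fin n) ⟨(i : ℕ) + 2, h2⟩).comp
          (rho i ⟨(i : ℕ) + 1, by omega⟩))
        = (rho (⟨(i : ℕ) + 1, by omega⟩ : Fin n) ⟨(i : ℕ) + 2, h2⟩).comp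
            ((rho i ⟨(i : ℕ) + 1, by omega⟩).comp
              (rho (⟨(i : ℕ) + 1, by omega⟩ : Fin n) ⟨(i : ℕ) + 2, h2⟩))) ∧
    (∃ φ : Equiv.Perm (Fin n) →* Module.End ℚ (PMod n),
      ∀ (i : Fin n) (hi : (i : ℕ) + 1 < n),
        φ (Equiv.swap i ⟨(i : ℕ) + 1, hi⟩) = rho i ⟨(i : ℕ) + 1, hi⟩) := by
  refine ⟨?_, ?_, ?_, ⟨phi n, fun i hi => phi_swap_adj i ⟨(i : ℕ) + 1, hi⟩ rfl⟩⟩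
  · intro i hi
    rw [← phi_swap_adj i ⟨(i : ℕ) + 1, hi⟩ rfl, ← Module.End.mul_eq_comp, ← map_mul,
      Equiv.swap_mul_self, map_one]
    rfl
  · intro i j hi hj hij
    rw [← phi_swap_adj i ⟨(i : ℕ) + 1, hi⟩ rfl, ← phi_swap_adj j ⟨(j : ℕ) + 1, hj⟩ rfl,
      ← Module.End.mul_eq_comp, ← Module.End.mul_eq_comp, ← map_mul, ← map_mul]
    congr 1
    apply swap_comm_of_ne <;>
      · apply Fin.ne_of_val_ne
        try simp only [Fin.val_mk]
        omega
  · intro i h2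
    rw [← phi_swap_adj i ⟨(i : ℕ) + 1, by omega⟩ rfl,
      ← phi_swap_adj (⟨(i : ℕ) + 1, by omega⟩ : Fin n) ⟨(i : ℕ) + 2, h2⟩ rfl,
      ← Module.End.mul_eq_comp, ← Module.End.mul_eq_comp, ← Module.End.mul_eq_comp,
      ← Module.End.mul_eq_comp, ← map_mul, ← map_mul, ← map_mul, ← map_mul]
    congr 1
    apply swap_braid <;>
      · apply Fin.ne_of_val_ne
        try simp only [Fin.val_mk]
        omega
end

section
/- Let π be an almost noncrossing partition of [n] and let C(π) = {1 ≤ i ≤ n−1 : s_i(π) is noncrossing} be its set of crossing indices. Then: (1) 1 ≤ |C(π)| ≤ 3; (2) if π crosses at i, then neither {i} nor {i+1} is a singleton block of π; (3) if π crosses at exactly two indices i < j with j ≠ i+1, then {i,j} and {i+1,j+1} are blocks of π; (4) if π crosses at both i and i+1, then {i,i+2} is a block of π; (5) if |C(π)| = 3, then C(π) = {i, i+1, i+2} for some i, and both {i,i+2} and {i+1,i+3} are blocks of π. -/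
namespace SkeinNC

/-- `π` crosses at the (0-indexed) index `i`: the adjacent transposition swapping
`i` and `i+1` turns `π` into a noncrossing partition. -/
def crossesAt {n : ℕ} (π : Setoid (Fin n)) (i : ℕ) : Prop :=
  ∃ h : i + 1 < n,
    IsNC (permSP (Equiv.swap ⟨i, Nat.lt_of_succ_lt h⟩ ⟨i + 1, h⟩) π)

end SkeinNC


namespace SkeinNC

variable {n : ℕ} {π : Setoid (Fin n)}

lemma key {i : ℕ} (hcr : crossesAt π i) {a b c d : Fin n}
    (hab : a < b) (hbc : b < c) (hcd : c < d)
    (hac : π.r a c) (hbd : π.r b d) (hnab : ¬ π.r a b) :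
    (a.val = i ∧ b.val = i + 1) ∨ (b.val = i ∧ c.val = i + 1) ∨
      (c.val = i ∧ d.val = i + 1) := by
  obtain ⟨h, hnc⟩ := hcr
  by_contra hpat
  push_neg at hpat
  obtain ⟨hp1, hp2, hp3⟩ := hpat
  set I : Fin n := ⟨i, Nat.lt_of_succ_lt h⟩ with hI
  set I1 : Fin n := ⟨i + 1, h⟩ with hI1
  set s := Equiv.swap I I1 with hsdef
  have hab' : a.val < b.val := hab
  have hbc' : b.val < c.val := hbc
  have hcd' : c.val < d.val := hcd
  have hs : ∀ x : Fin n, (s x).val =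
      if x.val = i then i + 1 else if x.val = i + 1 then i else x.val := by
    intro x
    rcases eq_or_ne x I with rfl | hxI
    · simp [hsdef, Equiv.swap_apply_left, hI, hI1]
    · rcases eq_or_ne x I1 with rfl | hxI1
      · simp [hsdef, Equiv.swap_apply_right, hI, hI1]
      · rw [hsdef, Equiv.swap_apply_of_ne_of_ne hxI hxI1]
        have h1 : x.val ≠ i := fun hh => hxI (Fin.ext hh)
        have h2 : x.val ≠ i + 1 := fun hh => hxI1 (Fin.ext hh)
        simp [h1, h2]
  have hτr : ∀ x y : Fin n, (permSP s π).r (s x) (s y) ↔ π.r x y := by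
    intro x y
    show π.r (s.symm (s x)) (s.symm (s y)) ↔ π.r x y
    simp
  have hni : (a.val ≠ i ∧ b.val ≠ i ∧ c.val ≠ i ∧ d.val ≠ i) ∨
      (a.val ≠ i + 1 ∧ b.val ≠ i + 1 ∧ c.val ≠ i + 1 ∧ d.val ≠ i + 1) := by
    omega
  have hsa := hs a; have hsb := hs b; have hsc := hs c; have hsd := hs d
  rcases hni with ⟨h1, h2, h3, h4⟩ | ⟨h1, h2, h3, h4⟩ <;>
  · have o1 : s a < s b := by
      rw [Fin.lt_def]; rw [hsa, hsb]; split_ifs <;> omega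
    have o2 : s b < s c := by
      rw [Fin.lt_def]; rw [hsb, hsc]; split_ifs <;> omega
    have o3 : s c < s d := by
      rw [Fin.lt_def]; rw [hsc, hsd]; split_ifs <;> omega
    have := hnc (s a) (s b) (s c) (s d) o1 o2 o3
      ((hτr a c).mpr hac) ((hτr b d).mpr hbd)
    exact hnab ((hτr a b).mp this)

lemma exists_cross (hnc : ¬ IsNC π) :
    ∃ a b c d : Fin n, a < b ∧ b < c ∧ c < d ∧ π.r a c ∧ π.r b d ∧ ¬ π.r a b := by
  unfold IsNC at hnc
  push_neg at hnc
  obtain ⟨a, b, c, d, h1, h2, h3, h4, h5, h6⟩ := hnc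
  exact ⟨a, b, c, d, h1, h2, h3, h4, h5, h6⟩

lemma quad_eq {i j : ℕ} (hij : i + 1 < j) (hi : crossesAt π i) (hj : crossesAt π j)
    {a b c d : Fin n} (hab : a < b) (hbc : b < c) (hcd : c < d)
    (hac : π.r a c) (hbd : π.r b d) (hnab : ¬ π.r a b) :
    a.val = i ∧ b.val = i + 1 ∧ c.val = j ∧ d.val = j + 1 := by
  have Hi := key hi hab hbc hcd hac hbd hnab
  have Hj := key hj hab hbc hcd hac hbd hnab
  have h1 : a.val < b.val := hab
  have h2 : b.val < c.val := hbc
  have h3 : c.val < d.val := hcd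
  omega

lemma quad3 {i : ℕ} (hi : crossesAt π i) (hi1 : crossesAt π (i + 1))
    {a b c d : Fin n} (hab : a < b) (hbc : b < c) (hcd : c < d)
    (hac : π.r a c) (hbd : π.r b d) (hnab : ¬ π.r a b) :
    (a.val = i ∧ b.val = i + 1 ∧ c.val = i + 2) ∨
      (b.val = i ∧ c.val = i + 1 ∧ d.val = i + 2) := by
  have Hi := key hi hab hbc hcd hac hbd hnab
  have Hj := key hi1 hab hbc hcd hac hbd hnab
  have h1 : a.val < b.val := hab
  have h2 : b.val < c.val := hbc
  have h3 : c.val < d.val := hcd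
  omega

lemma not_singleton {i : ℕ} (h : i + 1 < n) (hnc : ¬ IsNC π) (hci : crossesAt π i) :
    block π ⟨i, Nat.lt_of_le_of_lt (Nat.le_add_right i 1) h⟩ ≠
      {⟨i, Nat.lt_of_le_of_lt (Nat.le_add_right i 1) h⟩} ∧
      block π ⟨i + 1, h⟩ ≠ {⟨i + 1, h⟩} := by
  obtain ⟨a, b, c, d, hab, hbc, hcd, hac, hbd, hnab⟩ := exists_cross hnc
  set I : Fin n := ⟨i, by omega⟩ with hI
  set I1 : Fin n := ⟨i + 1, h⟩ with hI1
  have h1 : a.val < b.val := hab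
  have h2 : b.val < c.val := hbc
  have h3 : c.val < d.val := hcd
  have big : (∃ x : Fin n, x ≠ I ∧ π.r I x) ∧ (∃ y : Fin n, y ≠ I1 ∧ π.r I1 y) := by
    rcases key hci hab hbc hcd hac hbd hnab with ⟨e1, e2⟩ | ⟨e1, e2⟩ | ⟨e1, e2⟩
    · have ea : a = I := Fin.ext e1
      have eb : b = I1 := Fin.ext e2
      refine ⟨⟨c, fun hh => ?_, ea ▸ hac⟩, ⟨d, fun hh => ?_, eb ▸ hbd⟩⟩
      · apply_fun Fin.val at hh; rw [hI] at hh; simp at hh; omega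
      · apply_fun Fin.val at hh; rw [hI1] at hh; simp at hh; omega
    · have eb : b = I := Fin.ext e1
      have ec : c = I1 := Fin.ext e2
      refine ⟨⟨d, fun hh => ?_, eb ▸ hbd⟩, ⟨a, fun hh => ?_, π.symm (ec ▸ hac)⟩⟩
      · apply_fun Fin.val at hh; rw [hI] at hh; simp at hh; omega
      · apply_fun Fin.val at hh; rw [hI1] at hh; simp at hh; omega
    · have ec : c = I := Fin.ext e1
      have ed : d = I1 := Fin.ext e2
      refine ⟨⟨a, fun hh => ?_, π.symm (ec ▸ hac)⟩, ⟨b, fun hh => ?_, π.symm (ed ▸ hbd)⟩⟩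
      · apply_fun Fin.val at hh; rw [hI] at hh; simp at hh; omega
      · apply_fun Fin.val at hh; rw [hI1] at hh; simp at hh; omega
  obtain ⟨⟨x, hx, hrx⟩, ⟨y, hy, hry⟩⟩ := big
  constructor
  · intro hb
    have : x ∈ block π I := hrx
    rw [hb] at this
    exact hx this
  · intro hb
    have : y ∈ block π I1 := hry
    rw [hb] at this
    exact hy this

lemma lt_of_val {x y : Fin n} (h : x.val < y.val) : x < y := h
lemma lt_mk {x : Fin n} {k : ℕ} {hk : k < n} (h : x.val < k) : x < ⟨k, hk⟩ := h
lemma mk_lt {x : Fin n} {k : ℕ} {hk : k < n} (h : k < x.val) : (⟨k, hk⟩ : Fin n) < x := h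
lemma flt {m k : ℕ} {hm : m < n} {hk : k < n} (h : m < k) : (⟨m, hm⟩ : Fin n) < ⟨k, hk⟩ := h

lemma blocks_of_distant {i j : ℕ} (hi : i + 1 < n) (hj : j + 1 < n) (hij : i + 1 < j)
    (hnc : ¬ IsNC π) (hci : crossesAt π i) (hcj : crossesAt π j) :
    block π ⟨i, Nat.lt_of_le_of_lt (Nat.le_add_right i 1) hi⟩ =
      {⟨i, Nat.lt_of_le_of_lt (Nat.le_add_right i 1) hi⟩,
        ⟨j, Nat.lt_of_le_of_lt (Nat.le_add_right j 1) hj⟩} ∧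
      block π ⟨i + 1, hi⟩ = {⟨i + 1, hi⟩, ⟨j + 1, hj⟩} := by
  have hin : i < n := by omega
  have hjn : j < n := by omega
  obtain ⟨a, b, c, d, hab, hbc, hcd, hac, hbd, hnab⟩ := exists_cross hnc
  obtain ⟨e1, e2, e3, e4⟩ := quad_eq hij hci hcj hab hbc hcd hac hbd hnab
  obtain rfl : a = ⟨i, hin⟩ := Fin.ext e1
  obtain rfl : b = ⟨i + 1, hi⟩ := Fin.ext e2
  obtain rfl : c = ⟨j, hjn⟩ := Fin.ext e3
  obtain rfl : d = ⟨j + 1, hj⟩ := Fin.ext e4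
  constructor
  · ext x
    simp only [block, Set.mem_setOf_eq, Set.mem_insert_iff, Set.mem_singleton_iff]
    constructor
    · intro hx
      by_contra hcon
      push_neg at hcon
      obtain ⟨hxI, hxJ⟩ := hcon
      have hvI : x.val ≠ i := fun hh => hxI (Fin.ext hh)
      have hvJ : x.val ≠ j := fun hh => hxJ (Fin.ext hh)
      have hvI1 : x.val ≠ i + 1 := by
        intro hh
        obtain rfl : x = ⟨i + 1, hi⟩ := Fin.ext hh
        exact hnab hx
      have hvJ1 : x.val ≠ j + 1 := by
        intro hh
        obtain rfl : x = ⟨j + 1, hj⟩ := Fin.ext hh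
        exact hnab (π.trans hx (π.symm hbd))
      rcases (by omega : x.val < i ∨ (i + 1 < x.val ∧ x.val < j) ∨ j + 1 < x.val) with
        hlt | ⟨hgt, hlt⟩ | hgt
      · obtain ⟨q1, -⟩ := quad_eq hij hci hcj (lt_mk (by omega)) (flt (by omega))
          (flt (by omega)) (π.trans (π.symm hx) hac) hbd
          (fun hh => hnab (π.trans hx hh))
        omega
      · obtain ⟨-, -, q3, -⟩ := quad_eq hij hci hcj (flt (by omega)) (mk_lt (by omega))
          (lt_mk (by omega)) hx hbd hnab
        omega
      · obtain ⟨q1, -⟩ := quad_eq hij hci hcj (flt (by omega)) (flt (by omega))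
          (mk_lt (by omega)) hbd (π.trans (π.symm hac) hx)
          (fun hh => hnab (π.trans hac (π.symm hh)))
        exact (by omega : ¬ (i + 1 = i)) q1
    · rintro (rfl | rfl)
      · exact π.refl _
      · exact hac
  · ext x
    simp only [block, Set.mem_setOf_eq, Set.mem_insert_iff, Set.mem_singleton_iff]
    constructor
    · intro hx
      by_contra hcon
      push_neg at hcon
      obtain ⟨hxI1, hxJ1⟩ := hcon
      have hvI1 : x.val ≠ i + 1 := fun hh => hxI1 (Fin.ext hh)
      have hvJ1 : x.val ≠ j + 1 := fun hh => hxJ1 (Fin.ext hh)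
      have hvI : x.val ≠ i := by
        intro hh
        obtain rfl : x = ⟨i, hin⟩ := Fin.ext hh
        exact hnab (π.symm hx)
      have hvJ : x.val ≠ j := by
        intro hh
        obtain rfl : x = ⟨j, hjn⟩ := Fin.ext hh
        exact hnab (π.trans hac (π.symm hx))
      rcases (by omega : x.val < i ∨ (i + 1 < x.val ∧ x.val < j) ∨ j + 1 < x.val) with
        hlt | ⟨hgt, hlt⟩ | hgt
      · obtain ⟨q1, -⟩ := quad_eq hij hci hcj (lt_mk (by omega)) (flt (by omega))
          (flt (by omega)) (π.symm hx) hac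
          (fun hh => hnab (π.symm (π.trans hx hh)))
        omega
      · obtain ⟨-, q2, -⟩ := quad_eq hij hci hcj (mk_lt (by omega)) (lt_mk (by omega))
          (flt (by omega)) hac (π.trans (π.symm hx) hbd)
          (fun hh => hnab (π.trans hh (π.symm hx)))
        omega
      · obtain ⟨-, -, -, q4⟩ := quad_eq hij hci hcj (flt (by omega)) (flt (by omega))
          (mk_lt (by omega)) hac hx hnab
        omega
    · rintro (rfl | rfl)
      · exact π.refl _
      · exact hbd

lemma block_of_consec {i : ℕ} (h2 : i + 2 < n) (hnc : ¬ IsNC π)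
    (hi : crossesAt π i) (hi1 : crossesAt π (i + 1)) :
    block π ⟨i, Nat.lt_of_le_of_lt (Nat.le_add_right i 2) h2⟩ =
      {⟨i, Nat.lt_of_le_of_lt (Nat.le_add_right i 2) h2⟩, ⟨i + 2, h2⟩} := by
  have hin : i < n := by omega
  have h1n : i + 1 < n := by omega
  obtain ⟨a, b, c, d, hab, hbc, hcd, hac, hbd, hnab⟩ := exists_cross hnc
  have key2 : π.r (⟨i, hin⟩ : Fin n) ⟨i + 2, h2⟩ ∧
      ¬ π.r (⟨i, hin⟩ : Fin n) ⟨i + 1, h1n⟩ ∧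
      ((∃ d0 : Fin n, i + 2 < d0.val ∧ π.r (⟨i + 1, h1n⟩ : Fin n) d0) ∨
       (∃ a0 : Fin n, a0.val < i ∧ π.r a0 ⟨i + 1, h1n⟩ ∧ ¬ π.r a0 ⟨i, hin⟩)) := by
    rcases quad3 hi hi1 hab hbc hcd hac hbd hnab with ⟨e1, e2, e3⟩ | ⟨e1, e2, e3⟩
    · obtain rfl : a = ⟨i, hin⟩ := Fin.ext e1
      obtain rfl : b = ⟨i + 1, h1n⟩ := Fin.ext e2
      obtain rfl : c = ⟨i + 2, h2⟩ := Fin.ext e3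
      exact ⟨hac, hnab, Or.inl ⟨d, hcd, hbd⟩⟩
    · obtain rfl : b = ⟨i, hin⟩ := Fin.ext e1
      obtain rfl : c = ⟨i + 1, h1n⟩ := Fin.ext e2
      obtain rfl : d = ⟨i + 2, h2⟩ := Fin.ext e3
      exact ⟨hbd, fun hh => hnab (π.trans hac (π.symm hh)), Or.inr ⟨a, hab, hac, hnab⟩⟩
  obtain ⟨hII2, hnII1, hwit⟩ := key2
  have hnI1I2 : ¬ π.r (⟨i + 1, h1n⟩ : Fin n) ⟨i + 2, h2⟩ := fun hh =>
    hnII1 (π.trans hII2 (π.symm hh))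
  ext x
  simp only [block, Set.mem_setOf_eq, Set.mem_insert_iff, Set.mem_singleton_iff]
  constructor
  · intro hx
    by_contra hcon
    push_neg at hcon
    obtain ⟨hxI, hxI2⟩ := hcon
    have hvI : x.val ≠ i := fun hh => hxI (Fin.ext hh)
    have hvI2 : x.val ≠ i + 2 := fun hh => hxI2 (Fin.ext hh)
    have hvI1 : x.val ≠ i + 1 := by
      intro hh
      obtain rfl : x = ⟨i + 1, h1n⟩ := Fin.ext hh
      exact hnII1 hx
    rcases hwit with ⟨d0, hd0, hrd0⟩ | ⟨a0, ha0, hra0, hna0⟩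
    · rcases (by omega : x.val < i ∨ i + 2 < x.val) with hlt | hgt
      · rcases quad3 hi hi1 (lt_mk (by omega)) (flt (by omega)) (mk_lt hd0)
          (π.trans (π.symm hx) hII2) hrd0 (fun hh => hnII1 (π.trans hx hh)) with
          ⟨e, -⟩ | ⟨e, -⟩
        · omega
        · exact (by omega : ¬ (i + 1 = i)) e
      · rcases (by omega : x.val = d0.val ∨ x.val < d0.val ∨ d0.val < x.val) with
          heq | hlt' | hgt'
        · obtain rfl : x = d0 := Fin.ext heq
          exact hnII1 (π.trans hx (π.symm hrd0))
        · rcases quad3 hi hi1 (flt (by omega)) (mk_lt (by omega)) (lt_of_val hlt')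
            hx hrd0 hnII1 with ⟨-, -, e⟩ | ⟨e, -⟩
          · omega
          · exact (by omega : ¬ (i + 1 = i)) e
        · rcases quad3 hi hi1 (flt (by omega)) (mk_lt hd0) (lt_of_val hgt')
            hrd0 (π.trans (π.symm hII2) hx) hnI1I2 with ⟨e, -⟩ | ⟨e, -⟩
          · exact (by omega : ¬ (i + 1 = i)) e
          · exact (by omega : ¬ (i + 2 = i)) e
    · rcases (by omega : x.val < i ∨ i + 2 < x.val) with hlt | hgt
      · rcases (by omega : x.val = a0.val ∨ x.val < a0.val ∨ a0.val < x.val) with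
          heq | hlt' | hgt'
        · obtain rfl : x = a0 := Fin.ext heq
          exact hna0 (π.symm hx)
        · rcases quad3 hi hi1 (lt_of_val hlt') (lt_mk ha0) (flt (by omega))
            (π.symm hx) hra0
            (fun hh => hna0 (π.trans (π.symm hh) (π.symm hx))) with ⟨e, -⟩ | ⟨e, -⟩
          · omega
          · omega
        · rcases quad3 hi hi1 (lt_of_val hgt') (lt_mk (by omega)) (flt (by omega))
            hra0 (π.trans (π.symm hx) hII2)
            (fun hh => hna0 (π.trans hh (π.symm hx))) with ⟨e, -⟩ | ⟨e, -⟩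
          · omega
          · omega
      · rcases quad3 hi hi1 (lt_mk ha0) (flt (by omega)) (mk_lt (by omega))
          hra0 hx hna0 with ⟨e, -⟩ | ⟨-, -, e⟩
        · omega
        · omega
  · rintro (rfl | rfl)
    · exact π.refl _
    · exact hII2


end SkeinNC

open SkeinNC in
/-- **Observation (structure of almost noncrossing partitions).** Let `π` be an almost
noncrossing partition of `[n]` and `C(π)` its set of crossing indices.  Then
(1) `1 ≤ |C(π)| ≤ 3`; (2) if `π` crosses at `i` then neither `{i}` nor `{i+1}` is a
singleton block; (3) if `π` crosses at exactly the two indices `i < j` with `j ≠ i+1`,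
then `{i,j}` and `{i+1,j+1}` are blocks of `π`; (4) if `π` crosses at both `i` and `i+1`,
then `{i,i+2}` is a block of `π`; (5) if `|C(π)| = 3` then `C(π) = {i,i+1,i+2}` for some
`i` and both `{i,i+2}` and `{i+1,i+3}` are blocks of `π`.  (Everything is 0-indexed.) -/
theorem almost_noncrossing_observation (n : ℕ) (π : Setoid (Fin n))
    (hnc : ¬ IsNC π) (halmost : ∃ i, crossesAt π i) :
    (1 ≤ {i : ℕ | crossesAt π i}.ncard ∧ {i : ℕ | crossesAt π i}.ncard ≤ 3) ∧
    (∀ (i : ℕ) (h : i + 1 < n), crossesAt π i →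
      block π ⟨i, by omega⟩ ≠ {⟨i, by omega⟩} ∧ block π ⟨i + 1, h⟩ ≠ {⟨i + 1, h⟩}) ∧
    (∀ (i j : ℕ) (hi : i + 1 < n) (hj : j + 1 < n), i < j → j ≠ i + 1 →
      {m : ℕ | crossesAt π m} = {i, j} →
      block π ⟨i, by omega⟩ = {⟨i, by omega⟩, ⟨j, by omega⟩} ∧
      block π ⟨i + 1, hi⟩ = {⟨i + 1, hi⟩, ⟨j + 1, hj⟩}) ∧
    (∀ (i : ℕ) (h2 : i + 2 < n), crossesAt π i → crossesAt π (i + 1) →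
      block π ⟨i, by omega⟩ = {⟨i, by omega⟩, ⟨i + 2, h2⟩}) ∧
    ({m : ℕ | crossesAt π m}.ncard = 3 →
      ∃ (i : ℕ) (h3 : i + 3 < n),
        {m : ℕ | crossesAt π m} = {i, i + 1, i + 2} ∧
        block π ⟨i, by omega⟩ = {⟨i, by omega⟩, ⟨i + 2, by omega⟩} ∧
        block π ⟨i + 1, by omega⟩ = {⟨i + 1, by omega⟩, ⟨i + 3, h3⟩}) := by
  have hCfin : {m : ℕ | crossesAt π m}.Finite := by
    apply (Set.finite_Iio n).subset
    intro m hm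
    obtain ⟨hh, -⟩ := hm
    exact Set.mem_Iio.mpr (by omega)
  have hCne : {m : ℕ | crossesAt π m}.Nonempty := halmost
  have hi0 : crossesAt π (sInf {m : ℕ | crossesAt π m}) := Nat.sInf_mem hCne
  set i0 := sInf {m : ℕ | crossesAt π m} with hi0def
  have hmin : ∀ m, crossesAt π m → i0 ≤ m := fun m hm => Nat.sInf_le hm
  have hbound : ({m : ℕ | crossesAt π m} ⊆ {i0, i0 + 1, i0 + 2}) ∨
      (∃ j, {m : ℕ | crossesAt π m} ⊆ {i0, j}) := by
    by_cases hfar : ∃ j, crossesAt π j ∧ i0 + 3 ≤ j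
    · obtain ⟨j, hcj, hjfar⟩ := hfar
      refine Or.inr ⟨j, ?_⟩
      intro m hm
      obtain ⟨a, b, c, d, hab, hbc, hcd, hac, hbd, hnab⟩ := exists_cross hnc
      obtain ⟨e1, e2, e3, e4⟩ := quad_eq (by omega) hi0 hcj hab hbc hcd hac hbd hnab
      have hk := key hm hab hbc hcd hac hbd hnab
      simp only [Set.mem_insert_iff, Set.mem_singleton_iff]
      omega
    · push_neg at hfar
      refine Or.inl ?_
      intro m hm
      have h1 := hmin m hm
      have h2 := hfar m hm
      simp only [Set.mem_insert_iff, Set.mem_singleton_iff]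
      omega
  have htriple : ∀ k : ℕ, ({k, k + 1, k + 2} : Set ℕ).ncard ≤ 3 := by
    intro k
    have h1 := Set.ncard_insert_le k ({k + 1, k + 2} : Set ℕ)
    have h2 := Set.ncard_insert_le (k + 1) ({k + 2} : Set ℕ)
    have h3 : ({k + 2} : Set ℕ).ncard = 1 := Set.ncard_singleton _
    omega
  have hle3 : {m : ℕ | crossesAt π m}.ncard ≤ 3 := by
    rcases hbound with hsub | ⟨j, hsub⟩
    · exact (Set.ncard_le_ncard hsub (Set.toFinite _)).trans (htriple i0)
    · refine (Set.ncard_le_ncard hsub (Set.toFinite _)).trans ?_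
      have h := Set.ncard_insert_le i0 ({j} : Set ℕ)
      simp [Set.ncard_singleton] at h
      omega
  refine ⟨⟨?_, hle3⟩, fun i h hci => not_singleton h hnc hci, ?_, ?_, ?_⟩
  · have := (Set.ncard_pos hCfin).mpr hCne
    omega
  · intro i j hi hj hlt hne hCeq
    have hci : crossesAt π i := by
      have : i ∈ {m : ℕ | crossesAt π m} := by rw [hCeq]; simp
      exact this
    have hcj : crossesAt π j := by
      have : j ∈ {m : ℕ | crossesAt π m} := by rw [hCeq]; simp
      exact this
    exact blocks_of_distant hi hj (by omega) hnc hci hcj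
  · intro i h2 hci hci1
    exact block_of_consec h2 hnc hci hci1
  · intro h3card
    have hsub : {m : ℕ | crossesAt π m} ⊆ {i0, i0 + 1, i0 + 2} := by
      rcases hbound with hsub | ⟨j, hsub⟩
      · exact hsub
      · exfalso
        have hle : {m : ℕ | crossesAt π m}.ncard ≤ 2 := by
          refine (Set.ncard_le_ncard hsub (Set.toFinite _)).trans ?_
          have h := Set.ncard_insert_le i0 ({j} : Set ℕ)
          simp [Set.ncard_singleton] at h
          omega
        omega
    have hCeq : {m : ℕ | crossesAt π m} = {i0, i0 + 1, i0 + 2} :=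
      Set.eq_of_subset_of_ncard_le hsub (by rw [h3card]; exact htriple i0)
        (Set.toFinite _)
    have hc1 : crossesAt π (i0 + 1) := by
      have : i0 + 1 ∈ {m : ℕ | crossesAt π m} := by rw [hCeq]; simp
      exact this
    have hc2 : crossesAt π (i0 + 2) := by
      have : i0 + 2 ∈ {m : ℕ | crossesAt π m} := by rw [hCeq]; simp
      exact this
    obtain ⟨h3n, -⟩ := id hc2
    refine ⟨i0, by omega, hCeq, ?_, ?_⟩
    · exact block_of_consec (by omega) hnc hi0 hc1
    · exact block_of_consec (i := i0 + 1) (by omega) hnc hc1 hc2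
end

section
/- For every 1 ≤ i ≤ n−1, the linear operator τ_i : V(n) → V(n) satisfies τ_i² = identity. -/
namespace SkeinNC

section Aux

variable {n : ℕ} {π : Setoid (Fin n)} {i i' : Fin n}

lemma mem_block {x y : Fin n} : x ∈ block π y ↔ π.r y x := Iff.rfl

lemma block_eq_iff {x y : Fin n} : block π x = block π y ↔ π.r x y := by
  constructor
  · intro h
    have hy : y ∈ block π y := π.refl y
    rw [← h] at hy
    exact hy
  · intro h
    ext z
    exact ⟨fun hz => π.trans (π.symm h) hz, fun hz => π.trans h hz⟩

lemma hlt' (hii' : (i' : ℕ) = (i : ℕ) + 1) : i < i' := by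
  rw [Fin.lt_def, hii']; omega

lemma step (hii' : (i' : ℕ) = (i : ℕ) + 1) {x : Fin n} (h : i < x) : i' ≤ x := by
  rw [Fin.lt_def] at h; rw [Fin.le_def, hii']; omega

lemma step' (hii' : (i' : ℕ) = (i : ℕ) + 1) {x : Fin n} (h : x < i') : x ≤ i := by
  rw [Fin.lt_def, hii'] at h; rw [Fin.le_def]; omega

/-- crossing an untouched block from inside the merged block: `b, d` in the merged
block `A ∪ B`, `a ~ c` elsewhere, forces `a ∈ A ∪ B`. -/
lemma M1 (hii' : (i' : ℕ) = (i : ℕ) + 1) (hNC : IsNC π)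
    {a b c d : Fin n} (hab : a < b) (hbc : b < c) (hcd : c < d)
    (hac : π.r a c) (hb : π.r i b ∨ π.r i' b) (hd : π.r i d ∨ π.r i' d) :
    π.r i a ∨ π.r i' a := by
  have hlt : i < i' := hlt' hii'
  rcases hb with hb | hb <;> rcases hd with hd | hd
  · -- b, d ∈ A
    exact Or.inl (π.trans hb (π.symm (hNC a b c d hab hbc hcd hac (π.trans (π.symm hb) hd))))
  · -- b ∈ A, d ∈ B
    rcases lt_trichotomy i a with h1 | h1 | h1
    · exact Or.inl (hNC i a b c h1 hab hbc hb hac)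
    · exact Or.inl (h1 ▸ π.refl i)
    · rcases lt_trichotomy i c with h2 | h2 | h2
      · rcases lt_or_eq_of_le (step hii' h2) with h3 | h3
        · exact Or.inr (π.symm (hNC a i' c d (lt_trans h1 hlt) h3 hcd hac hd))
        · exact Or.inr (π.symm (h3 ▸ hac))
      · exact Or.inl (π.symm (h2 ▸ hac))
      · exact Or.inl (π.trans hb (π.symm (hNC a b c i hab hbc h2 hac (π.symm hb))))
  · -- b ∈ B, d ∈ A
    rcases lt_trichotomy i' a with h1 | h1 | h1
    · exact Or.inr (hNC i' a b c h1 hab hbc hb hac)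
    · exact Or.inr (h1 ▸ π.refl i')
    · rcases lt_or_eq_of_le (step' hii' h1) with h4 | h4
      · rcases lt_trichotomy i c with h2 | h2 | h2
        · exact Or.inl (π.symm (hNC a i c d h4 h2 hcd hac hd))
        · exact Or.inl (π.symm (h2 ▸ hac))
        · exact Or.inr (π.trans hb (π.symm (hNC a b c i' hab hbc (lt_trans h2 hlt) hac (π.symm hb))))
      · exact Or.inl (h4 ▸ π.refl i)
  · -- b, d ∈ B
    exact Or.inr (π.trans hb (π.symm (hNC a b c d hab hbc hcd hac (π.trans (π.symm hb) hd))))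

/-- crossing from outside: `a, c` in the merged block, `b ~ d` both outside, impossible. -/
lemma M2 (hii' : (i' : ℕ) = (i : ℕ) + 1) (hNC : IsNC π)
    {a b c d : Fin n} (hab : a < b) (hbc : b < c) (hcd : c < d)
    (hbd : π.r b d) (ha : π.r i a ∨ π.r i' a) (hc : π.r i c ∨ π.r i' c)
    (hbn : ¬ π.r i b) (hbn' : ¬ π.r i' b) (hdn : ¬ π.r i d) (hdn' : ¬ π.r i' d) :
    False := by
  have hlt : i < i' := hlt' hii'
  rcases ha with ha | ha <;> rcases hc with hc | hc
  · exact hbn (π.trans ha (hNC a b c d hab hbc hcd (π.trans (π.symm ha) hc) hbd))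
  · -- a ∈ A, c ∈ B
    rcases lt_trichotomy i b with h1 | h1 | h1
    · rcases lt_or_eq_of_le (step hii' h1) with h2 | h2
      · exact hbn' (hNC i' b c d h2 hbc hcd hc hbd)
      · exact hbn' (h2 ▸ π.refl i')
    · exact hbn (h1 ▸ π.refl i)
    · rcases lt_trichotomy i d with h2 | h2 | h2
      · exact hbn (π.trans ha (hNC a b i d hab h1 h2 (π.symm ha) hbd))
      · exact hdn (h2 ▸ π.refl i)
      · exact hbn' (π.trans hc (π.symm (hNC b c d i' hbc hcd (lt_trans h2 hlt) hbd (π.symm hc))))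
  · -- a ∈ B, c ∈ A
    rcases lt_trichotomy i' b with h1 | h1 | h1
    · exact hbn (hNC i b c d (lt_trans hlt h1) hbc hcd hc hbd)
    · exact hbn' (h1 ▸ π.refl i')
    · rcases lt_trichotomy i' d with h2 | h2 | h2
      · exact hbn' (π.trans ha (hNC a b i' d hab h1 h2 (π.symm ha) hbd))
      · exact hdn' (h2 ▸ π.refl i')
      · rcases lt_or_eq_of_le (step' hii' h2) with h3 | h3
        · exact hbn (π.trans hc (π.symm (hNC b c d i hbc hcd h3 hbd (π.symm hc))))
        · exact hdn (h3 ▸ π.refl i)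
  · exact hbn' (π.trans ha (hNC a b c d hab hbc hcd (π.trans (π.symm ha) hc) hbd))

end Aux
section Aux2

variable {n : ℕ} {π : Setoid (Fin n)} {i i' : Fin n}

lemma bridge (hAB : ¬ π.r i i') {u v : Fin n}
    (hu : π.r i u) (hv : π.r i' v) (huv : π.r u v) : False :=
  hAB (π.trans (π.trans hu huv) (π.symm hv))

/-- `a, c` in `A ∖ {i}`, `b, d` in `B ∪ {i}` is impossible. -/
lemma K3 (hii' : (i' : ℕ) = (i : ℕ) + 1) (hNC : IsNC π) (hAB : ¬ π.r i i')
    {a b c d : Fin n} (hab : a < b) (hbc : b < c) (hcd : c < d)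
    (hac : π.r a c) (ha : π.r i a)
    (hb : π.r i' b ∨ b = i) (hd : π.r i' d ∨ d = i) : False := by
  have hlt : i < i' := hlt' hii'
  rcases hb with hb | hbi
  · rcases hd with hd | hdi
    · exact bridge hAB ha hb (hNC a b c d hab hbc hcd hac (π.trans (π.symm hb) hd))
    · have hci : c < i := lt_of_lt_of_eq hcd hdi
      exact bridge hAB ha hb (hNC a b c i' hab hbc (lt_trans hci hlt) hac (π.symm hb))
  · rcases hd with hd | hdi
    · have hic : i < c := lt_of_eq_of_lt hbi.symm hbc
      rcases lt_or_eq_of_le (step hii' hic) with h2 | h2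
      · exact hAB (π.trans ha (hNC a i' c d (lt_trans (lt_of_lt_of_eq hab hbi) hlt) h2 hcd hac hd))
      · exact hAB (π.trans ha (h2 ▸ hac))
    · have : b < d := lt_trans hbc hcd
      rw [hbi, hdi] at this
      exact lt_irrefl i this

/-- `b, d` in `A ∖ {i}`, `a, c` in `B ∪ {i}` is impossible. -/
lemma K3' (hii' : (i' : ℕ) = (i : ℕ) + 1) (hNC : IsNC π) (hAB : ¬ π.r i i')
    {a b c d : Fin n} (hab : a < b) (hbc : b < c) (hcd : c < d)
    (hbd : π.r b d) (hb : π.r i b)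
    (ha : π.r i' a ∨ a = i) (hc : π.r i' c ∨ c = i) : False := by
  have hlt : i < i' := hlt' hii'
  rcases ha with ha | hai
  · rcases hc with hc | hci
    · exact bridge hAB hb ha
        (π.symm (hNC a b c d hab hbc hcd (π.trans (π.symm ha) hc) hbd))
    · have hid : i < d := lt_of_eq_of_lt hci.symm hcd
      rcases lt_or_eq_of_le (step hii' hid) with h2 | h2
      · exact bridge hAB hb ha
          (π.symm (hNC a b i' d hab (lt_trans (lt_of_lt_of_eq hbc hci) hlt) h2 (π.symm ha) hbd))
      · exact hAB (h2 ▸ (π.trans hb hbd))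
  · rcases hc with hc | hci
    · have hib : i < b := lt_of_eq_of_lt hai.symm hab
      rcases lt_or_eq_of_le (step hii' hib) with h2 | h2
      · exact hAB (π.trans hb (π.symm (hNC i' b c d h2 hbc hcd hc hbd)))
      · exact hAB (h2 ▸ hb)
    · have : a < c := lt_trans hab hbc
      rw [hai, hci] at this
      exact lt_irrefl i this

/-- `a, c` in `B ∖ {i'}`, `b, d` in `A ∪ {i'}` is impossible. -/
lemma K4 (hii' : (i' : ℕ) = (i : ℕ) + 1) (hNC : IsNC π) (hAB : ¬ π.r i i')
    {a b c d : Fin n} (hab : a < b) (hbc : b < c) (hcd : c < d)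
    (hac : π.r a c) (ha : π.r i' a)
    (hb : π.r i b ∨ b = i') (hd : π.r i d ∨ d = i') : False := by
  have hlt : i < i' := hlt' hii'
  rcases hb with hb | hbi
  · rcases hd with hd | hdi
    · exact bridge hAB hb ha
        (π.symm (hNC a b c d hab hbc hcd hac (π.trans (π.symm hb) hd)))
    · have hci' : c < i' := lt_of_lt_of_eq hcd hdi
      rcases lt_or_eq_of_le (step' hii' hci') with h2 | h2
      · exact bridge hAB hb ha
          (π.symm (hNC a b c i hab hbc h2 hac (π.symm hb)))
      · exact hAB (π.symm (h2 ▸ (π.trans ha hac)))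
  · rcases hd with hd | hdi
    · have hai' : a < i' := lt_of_lt_of_eq hab hbi
      rcases lt_or_eq_of_le (step' hii' hai') with h2 | h2
      · have hic : i < c := lt_trans hlt (lt_of_eq_of_lt hbi.symm hbc)
        have h := hNC a i c d h2 hic hcd hac hd
        exact hAB (π.trans (π.symm h) (π.symm ha))
      · exact hAB (π.symm (h2 ▸ ha))
    · have : b < d := lt_trans hbc hcd
      rw [hbi, hdi] at this
      exact lt_irrefl i' this

/-- `b, d` in `B ∖ {i'}`, `a, c` in `A ∪ {i'}` is impossible. -/
lemma K4' (hii' : (i' : ℕ) = (i : ℕ) + 1) (hNC : IsNC π) (hAB : ¬ π.r i i')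
    {a b c d : Fin n} (hab : a < b) (hbc : b < c) (hcd : c < d)
    (hbd : π.r b d) (hb : π.r i' b)
    (ha : π.r i a ∨ a = i') (hc : π.r i c ∨ c = i') : False := by
  have hlt : i < i' := hlt' hii'
  rcases ha with ha | hai
  · rcases hc with hc | hci
    · have h := hNC a b c d hab hbc hcd (π.trans (π.symm ha) hc) hbd
      exact hAB (π.trans (π.trans ha h) (π.symm hb))
    · have hbi' : b < i' := lt_of_lt_of_eq hbc hci
      rcases lt_or_eq_of_le (step' hii' hbi') with h2 | h2
      · have hid : i < d := lt_trans hlt (lt_of_eq_of_lt hci.symm hcd)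
        have h := hNC a b i d hab h2 hid (π.symm ha) hbd
        exact hAB (π.trans (π.trans ha h) (π.symm hb))
      · exact hAB (π.symm (h2 ▸ hb))
  · rcases hc with hc | hci
    · have hib : i < b := lt_trans hlt (lt_of_eq_of_lt hai.symm hab)
      have h := hNC i b c d hib hbc hcd hc hbd
      exact hAB (π.trans h (π.symm hb))
    · have : a < c := lt_trans hab hbc
      rw [hai, hci] at this
      exact lt_irrefl i' this

end Aux2
section Aux3

variable {n : ℕ} {π : Setoid (Fin n)} {i i' : Fin n}

lemma swap_r {x y : Fin n} :
    (permSP (Equiv.swap i i') π).r x y ↔ π.r (Equiv.swap i i' x) (Equiv.swap i i' y) := by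
  exact Iff.rfl

lemma permSP_swap_swap : permSP (Equiv.swap i i') (permSP (Equiv.swap i i') π) = π := by
  refine Setoid.ext fun x y => ?_
  have h1 : (permSP (Equiv.swap i i') (permSP (Equiv.swap i i') π)).r x y ↔ π.r x y := by
    rw [swap_r, swap_r, Equiv.swap_apply_self, Equiv.swap_apply_self]
  exact h1

lemma rep_r {S C : Set (Fin n)} {x y : Fin n} :
    (replaceTwo π S C).r x y ↔
      ((x ∉ S ∧ y ∉ S ∧ π.r x y) ∨ (x ∈ S ∧ y ∈ S ∧ (x ∈ C ↔ y ∈ C))) := Iff.rfl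

lemma memS {x : Fin n} :
    x ∈ block π i ∪ block π i' ↔ π.r i x ∨ π.r i' x := Iff.rfl

/-- the union of the blocks of `i` and `i'` is unchanged by the swap. -/
lemma unionS_eq :
    block (permSP (Equiv.swap i i') π) i ∪ block (permSP (Equiv.swap i i') π) i'
      = block π i ∪ block π i' := by
  ext x
  rw [memS, memS, swap_r, swap_r, Equiv.swap_apply_left, Equiv.swap_apply_right]
  by_cases hx : x = i
  · rw [hx, Equiv.swap_apply_left]
    exact ⟨fun _ => Or.inl (π.refl i), fun _ => Or.inl (π.refl i')⟩
  · by_cases hx' : x = i'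
    · rw [hx', Equiv.swap_apply_right]
      exact ⟨fun _ => Or.inr (π.refl i'), fun _ => Or.inr (π.refl i)⟩
    · rw [Equiv.swap_apply_of_ne_of_ne hx hx']
      exact Or.comm

end Aux3
section Aux4

variable {n : ℕ} {π : Setoid (Fin n)} {i i' : Fin n}

lemma C3_eq (hAB : ¬ π.r i i') :
    block (permSP (Equiv.swap i i') π) i' \ {i'} = block π i \ {i} := by
  ext x
  simp only [Set.mem_diff, Set.mem_singleton_iff, mem_block, swap_r,
    Equiv.swap_apply_right]
  by_cases hx : x = i
  · rw [hx]
    simp only [Equiv.swap_apply_left]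
    exact iff_of_false (fun h => hAB h.1) (by simp)
  · by_cases hx' : x = i'
    · rw [hx']
      simp only [Equiv.swap_apply_right]
      exact iff_of_false (by simp) (fun h => hAB h.1)
    · rw [Equiv.swap_apply_of_ne_of_ne hx hx']
      exact ⟨fun h => ⟨h.1, hx⟩, fun h => ⟨h.1, hx'⟩⟩

lemma C4_eq (hAB : ¬ π.r i i') :
    block (permSP (Equiv.swap i i') π) i \ {i} = block π i' \ {i'} := by
  ext x
  simp only [Set.mem_diff, Set.mem_singleton_iff, mem_block, swap_r,
    Equiv.swap_apply_left]
  by_cases hx : x = i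
  · rw [hx]
    simp only [Equiv.swap_apply_left]
    exact iff_of_false (by simp) (fun h => hAB (π.symm h.1))
  · by_cases hx' : x = i'
    · rw [hx']
      simp only [Equiv.swap_apply_right]
      exact iff_of_false (fun h => hAB (π.symm h.1)) (by simp)
    · rw [Equiv.swap_apply_of_ne_of_ne hx hx']
      exact ⟨fun h => ⟨h.1, hx'⟩, fun h => ⟨h.1, hx⟩⟩

lemma rep_perm_eq {S C : Set (Fin n)} (hiS : i ∈ S) (hi'S : i' ∈ S) :
    replaceTwo (permSP (Equiv.swap i i') π) S C = replaceTwo π S C := by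
  refine Setoid.ext fun x y => ?_
  have key : ∀ x y : Fin n, x ∉ S → y ∉ S →
      ((permSP (Equiv.swap i i') π).r x y ↔ π.r x y) := by
    intro x y hx hy
    have hxi : x ≠ i := fun he => hx (by rw [he]; exact hiS)
    have hxi' : x ≠ i' := fun he => hx (by rw [he]; exact hi'S)
    have hyi : y ≠ i := fun he => hy (by rw [he]; exact hiS)
    have hyi' : y ≠ i' := fun he => hy (by rw [he]; exact hi'S)
    rw [swap_r, Equiv.swap_apply_of_ne_of_ne hxi hxi',
      Equiv.swap_apply_of_ne_of_ne hyi hyi']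
  have h : (replaceTwo (permSP (Equiv.swap i i') π) S C).r x y ↔
      (replaceTwo π S C).r x y := by
    rw [rep_r, rep_r]
    constructor
    · rintro (⟨hx, hy, h⟩ | h)
      · exact Or.inl ⟨hx, hy, (key x y hx hy).mp h⟩
      · exact Or.inr h
    · rintro (⟨hx, hy, h⟩ | h)
      · exact Or.inl ⟨hx, hy, (key x y hx hy).mpr h⟩
      · exact Or.inr h
  exact h

lemma memC3 {x : Fin n} : x ∈ block π i \ {i} ↔ π.r i x ∧ x ≠ i := by
  simp only [Set.mem_diff, Set.mem_singleton_iff, mem_block]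

lemma memC4 {x : Fin n} : x ∈ block π i' \ {i'} ↔ π.r i' x ∧ x ≠ i' := by
  simp only [Set.mem_diff, Set.mem_singleton_iff, mem_block]

lemma notC3 {x : Fin n} (hxS : π.r i x ∨ π.r i' x) (hx : x ∉ block π i \ {i}) :
    π.r i' x ∨ x = i := by
  rcases hxS with h | h
  · by_cases hxi : x = i
    · exact Or.inr hxi
    · exact absurd (memC3.mpr ⟨h, hxi⟩) hx
  · exact Or.inl h

lemma notC4 {x : Fin n} (hxS : π.r i x ∨ π.r i' x) (hx : x ∉ block π i' \ {i'}) :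
    π.r i x ∨ x = i' := by
  rcases hxS with h | h
  · exact Or.inl h
  · by_cases hxi : x = i'
    · exact Or.inr hxi
    · exact absurd (memC4.mpr ⟨h, hxi⟩) hx

lemma NC_main (hii' : (i' : ℕ) = (i : ℕ) + 1) (hNC : IsNC π) (C : Set (Fin n))
    (hin : ∀ a b c d : Fin n, a < b → b < c → c < d →
      a ∈ block π i ∪ block π i' → b ∈ block π i ∪ block π i' →
      c ∈ block π i ∪ block π i' → d ∈ block π i ∪ block π i' →
      (a ∈ C ↔ c ∈ C) → (b ∈ C ↔ d ∈ C) → (a ∈ C ↔ b ∈ C)) :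
    IsNC (replaceTwo π (block π i ∪ block π i') C) := by
  intro a b c d hab hbc hcd h1 h2
  rw [rep_r] at h1 h2 ⊢
  rcases h1 with ⟨han, hcn, hac⟩ | ⟨haS, hcS, hacC⟩
  · rcases h2 with ⟨hbn, hdn, hbd⟩ | ⟨hbS, hdS, hbdC⟩
    · exact Or.inl ⟨han, hbn, hNC a b c d hab hbc hcd hac hbd⟩
    · exact absurd (memS.mpr (M1 hii' hNC hab hbc hcd hac (memS.mp hbS) (memS.mp hdS))) han
  · rcases h2 with ⟨hbn, hdn, hbd⟩ | ⟨hbS, hdS, hbdC⟩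
    · exact absurd (M2 hii' hNC hab hbc hcd hbd (memS.mp haS) (memS.mp hcS)
        (fun h => hbn (memS.mpr (Or.inl h))) (fun h => hbn (memS.mpr (Or.inr h)))
        (fun h => hdn (memS.mpr (Or.inl h))) (fun h => hdn (memS.mpr (Or.inr h)))) not_false
    · exact Or.inr ⟨haS, hbS, hin a b c d hab hbc hcd haS hbS hcS hdS hacC hbdC⟩

lemma NC2 (hii' : (i' : ℕ) = (i : ℕ) + 1) (hNC : IsNC π) :
    IsNC (replaceTwo π (block π i ∪ block π i') {i, i'}) := by
  refine NC_main hii' hNC _ ?_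
  intro a b c d hab hbc hcd _ _ _ _ hacC hbdC
  have hmem : ∀ x : Fin n, x ∈ ({i, i'} : Set (Fin n)) ↔ x = i ∨ x = i' := by
    intro x; simp [Set.mem_insert_iff]
  by_cases hA : a ∈ ({i, i'} : Set (Fin n))
  · exfalso
    have hC := hacC.mp hA
    have hac2 : a < c := lt_trans hab hbc
    rcases (hmem a).mp hA with ha | ha <;> rcases (hmem c).mp hC with hc | hc
    · rw [ha, hc] at hac2; exact lt_irrefl i hac2
    · rw [ha] at hab; rw [hc] at hbc
      exact absurd (step hii' hab) (not_le.mpr hbc)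
    · rw [ha, hc] at hac2
      exact lt_irrefl i (lt_trans (hlt' hii') hac2)
    · rw [ha, hc] at hac2; exact lt_irrefl i' hac2
  · by_cases hB : b ∈ ({i, i'} : Set (Fin n))
    · exfalso
      have hD := hbdC.mp hB
      have hbd2 : b < d := lt_trans hbc hcd
      rcases (hmem b).mp hB with hb | hb <;> rcases (hmem d).mp hD with hd | hd
      · rw [hb, hd] at hbd2; exact lt_irrefl i hbd2
      · rw [hb] at hbc; rw [hd] at hcd
        exact absurd (step hii' hbc) (not_le.mpr hcd)
      · rw [hb, hd] at hbd2
        exact lt_irrefl i (lt_trans (hlt' hii') hbd2)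
      · rw [hb, hd] at hbd2; exact lt_irrefl i' hbd2
    · exact iff_of_false hA hB

lemma NC3 (hii' : (i' : ℕ) = (i : ℕ) + 1) (hNC : IsNC π) (hAB : ¬ π.r i i') :
    IsNC (replaceTwo π (block π i ∪ block π i') (block π i \ {i})) := by
  refine NC_main hii' hNC _ ?_
  intro a b c d hab hbc hcd haS hbS hcS hdS hacC hbdC
  by_cases hA : a ∈ block π i \ {i}
  · by_cases hB : b ∈ block π i \ {i}
    · exact iff_of_true hA hB
    · exfalso
      have hC := hacC.mp hA
      have hD : d ∉ block π i \ {i} := fun h => hB (hbdC.mpr h)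
      exact K3 hii' hNC hAB hab hbc hcd
        (π.trans (π.symm (memC3.mp hA).1) (memC3.mp hC).1) (memC3.mp hA).1
        (notC3 (memS.mp hbS) hB) (notC3 (memS.mp hdS) hD)
  · by_cases hB : b ∈ block π i \ {i}
    · exfalso
      have hD := hbdC.mp hB
      have hC : c ∉ block π i \ {i} := fun h => hA (hacC.mpr h)
      exact K3' hii' hNC hAB hab hbc hcd
        (π.trans (π.symm (memC3.mp hB).1) (memC3.mp hD).1) (memC3.mp hB).1
        (notC3 (memS.mp haS) hA) (notC3 (memS.mp hcS) hC)
    · exact iff_of_false hA hB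

lemma NC4 (hii' : (i' : ℕ) = (i : ℕ) + 1) (hNC : IsNC π) (hAB : ¬ π.r i i') :
    IsNC (replaceTwo π (block π i ∪ block π i') (block π i' \ {i'})) := by
  refine NC_main hii' hNC _ ?_
  intro a b c d hab hbc hcd haS hbS hcS hdS hacC hbdC
  by_cases hA : a ∈ block π i' \ {i'}
  · by_cases hB : b ∈ block π i' \ {i'}
    · exact iff_of_true hA hB
    · exfalso
      have hC := hacC.mp hA
      have hD : d ∉ block π i' \ {i'} := fun h => hB (hbdC.mpr h)
      exact K4 hii' hNC hAB hab hbc hcd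
        (π.trans (π.symm (memC4.mp hA).1) (memC4.mp hC).1) (memC4.mp hA).1
        (notC4 (memS.mp hbS) hB) (notC4 (memS.mp hdS) hD)
  · by_cases hB : b ∈ block π i' \ {i'}
    · exfalso
      have hD := hbdC.mp hB
      have hC : c ∉ block π i' \ {i'} := fun h => hA (hacC.mpr h)
      exact K4' hii' hNC hAB hab hbc hcd
        (π.trans (π.symm (memC4.mp hB).1) (memC4.mp hD).1) (memC4.mp hB).1
        (notC4 (memS.mp haS) hA) (notC4 (memS.mp hcS) hC)
    · exact iff_of_false hA hB

end Aux4
section Aux5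

variable {n : ℕ} {π : Setoid (Fin n)} {i i' : Fin n}

lemma tau_bp (σ : Setoid (Fin n)) : tau i i' (bp σ) = tauFun i i' σ := by
  simp [tau, bp]

lemma tau_basis (hii' : (i' : ℕ) = (i : ℕ) + 1) (hNC : IsNC π) :
    tauFun i i' π ∈ Vsub n ∧ tau i i' (tauFun i i' π) = bp π := by
  have hbp : ∀ σ : Setoid (Fin n), IsNC σ → bp σ ∈ Vsub n :=
    fun σ hσ => Submodule.subset_span ⟨σ, hσ, rfl⟩
  by_cases hbb : block π i = block π i'
  · rw [tauFun, if_pos hbb]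
    exact ⟨neg_mem (hbp π hNC), by rw [map_neg, tau_bp, tauFun, if_pos hbb, neg_neg]⟩
  · have hAB : ¬ π.r i i' := fun h => hbb (block_eq_iff.mpr h)
    by_cases hρ : IsNC (permSP (Equiv.swap i i') π)
    · rw [tauFun, if_neg hbb, if_pos hρ]
      refine ⟨hbp _ hρ, ?_⟩
      rw [tau_bp, tauFun]
      have hbb2 : ¬ (block (permSP (Equiv.swap i i') π) i
          = block (permSP (Equiv.swap i i') π) i') := by
        rw [block_eq_iff]
        intro h
        rw [swap_r, Equiv.swap_apply_left, Equiv.swap_apply_right] at h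
        exact hAB (π.symm h)
      rw [if_neg hbb2, permSP_swap_swap, if_pos hNC]
    · set ρ := permSP (Equiv.swap i i') π with hρdef
      have hiS : i ∈ block π i ∪ block π i' := memS.mpr (Or.inl (π.refl i))
      have hi'S : i' ∈ block π i ∪ block π i' := memS.mpr (Or.inr (π.refl i'))
      have hskein : skeinAt ρ i i' =
          bp π + bp (replaceTwo π (block π i ∪ block π i') {i, i'})
          - (if 3 ≤ Nat.card (block ρ i') then
              bp (replaceTwo π (block π i ∪ block π i') (block π i \ {i})) else 0)
          - (if 3 ≤ Nat.card (block ρ i) then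
              bp (replaceTwo π (block π i ∪ block π i') (block π i' \ {i'})) else 0) := by
        rw [skeinAt, hρdef, permSP_swap_swap, unionS_eq, C3_eq hAB, C4_eq hAB,
          rep_perm_eq hiS hi'S, rep_perm_eq hiS hi'S, rep_perm_eq hiS hi'S]
      have htau : tauFun i i' π = skeinAt ρ i i' := by
        rw [tauFun, if_neg hbb, if_neg hρ]
      constructor
      · rw [htau, hskein]
        refine sub_mem (sub_mem (add_mem (hbp π hNC) (hbp _ (NC2 hii' hNC))) ?_) ?_
        · split_ifs with h
          · exact hbp _ (NC3 hii' hNC hAB)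
          · exact zero_mem _
        · split_ifs with h
          · exact hbp _ (NC4 hii' hNC hAB)
          · exact zero_mem _
      · rw [htau, hskein]
        have e2 : tau i i' (bp (replaceTwo π (block π i ∪ block π i') {i, i'}))
            = - bp (replaceTwo π (block π i ∪ block π i') {i, i'}) := by
          rw [tau_bp, tauFun, if_pos]
          exact block_eq_iff.mpr (rep_r.mpr (Or.inr ⟨hiS, hi'S,
            iff_of_true (by simp) (by simp)⟩))
        have e3 : tau i i' (bp (replaceTwo π (block π i ∪ block π i') (block π i \ {i})))
            = - bp (replaceTwo π (block π i ∪ block π i') (block π i \ {i})) := by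
          rw [tau_bp, tauFun, if_pos]
          exact block_eq_iff.mpr (rep_r.mpr (Or.inr ⟨hiS, hi'S,
            iff_of_false (fun h => (memC3.mp h).2 rfl) (fun h => hAB (memC3.mp h).1)⟩))
        have e4 : tau i i' (bp (replaceTwo π (block π i ∪ block π i') (block π i' \ {i'})))
            = - bp (replaceTwo π (block π i ∪ block π i') (block π i' \ {i'})) := by
          rw [tau_bp, tauFun, if_pos]
          exact block_eq_iff.mpr (rep_r.mpr (Or.inr ⟨hiS, hi'S,
            iff_of_false (fun h => hAB (π.symm (memC4.mp h).1)) (fun h => (memC4.mp h).2 rfl)⟩))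
        have e1 : tau i i' (bp π) = skeinAt ρ i i' := by rw [tau_bp]; exact htau
        rw [map_sub, map_sub, map_add, e1, e2, apply_ite (tau i i'),
          apply_ite (tau i i'), map_zero, e3, e4, hskein]
        split_ifs <;> abel

end Aux5

end SkeinNC

open SkeinNC in
/-- **Lemma.** The skein operator `τ_i : V(n) → V(n)` satisfies `τ_i² = 1`.
(Here `V(n)` is the span `Vsub n` of the noncrossing partitions inside the free module
on all set partitions; `τ_i` maps `V(n)` into itself and squares to the identity there.) -/
theorem tau_squared (n : ℕ) (i : Fin n) (hi : (i : ℕ) + 1 < n) :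
    ∀ x ∈ Vsub n,
      tau i ⟨(i : ℕ) + 1, hi⟩ x ∈ Vsub n ∧
      tau i ⟨(i : ℕ) + 1, hi⟩ (tau i ⟨(i : ℕ) + 1, hi⟩ x) = x := by
  intro x hx
  set i' : Fin n := ⟨(i : ℕ) + 1, hi⟩ with hi'def
  have hii' : (i' : ℕ) = (i : ℕ) + 1 := rfl
  have key : Vsub n ≤ Submodule.comap (tau i i') (Vsub n) ⊓
      LinearMap.ker (tau i i' ∘ₗ tau i i' - LinearMap.id) := by
    rw [Vsub]
    refine Submodule.span_le.mpr ?_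
    rintro y ⟨π, hπ, rfl⟩
    obtain ⟨h1, h2⟩ := tau_basis hii' hπ
    refine Submodule.mem_inf.mpr ⟨?_, ?_⟩
    · exact Submodule.mem_comap.mpr (by rw [tau_bp]; exact h1)
    · refine LinearMap.mem_ker.mpr ?_
      simp only [LinearMap.sub_apply, LinearMap.comp_apply, LinearMap.id_apply]
      rw [tau_bp, h2, sub_self]
  have hx2 := key hx
  rw [Submodule.mem_inf] at hx2
  refine ⟨Submodule.mem_comap.mp hx2.1, ?_⟩
  have h0 := LinearMap.mem_ker.mp hx2.2
  simp only [LinearMap.sub_apply, LinearMap.comp_apply, LinearMap.id_apply] at h0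
  exact sub_eq_zero.mp h0
end
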